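/- In approval voting, if on input (C,V,p) with p ∈ C it is the case that p does not achieve the maximal approval count Y and exactly one candidate achieves Y, then no partition (C₁,C₂) of C makes p a winner of the two-stage RPC-TE election; i.e., p is not in Approval-CC-RPC-TE-NUW in this case. -/
import Mathlib

open Classical

/-- Number of votes in `V` approving candidate `c`. -/
def appCount {α : Type*} (V : List (α → Bool)) (c : α) : ℕ :=
  (V.filter (fun v => v c)).length

/-- Winner set of the approval election on candidate set `C` with votes `V`. -/
noncomputable def appWinners {α : Type*} (C : Finset α) (V : List (α → Bool)) : Finset α :=
  C.filter (fun c => ∀ d ∈ C, appCount V d ≤ appCount V c)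

/-- Ties-eliminate survivor set: the unique winner if there is exactly one winner,
else the empty set. -/
noncomputable def appUW {α : Type*} (C : Finset α) (V : List (α → Bool)) : Finset α :=
  if (appWinners C V).card = 1 then appWinners C V else ∅

/-- if `p` does not achieve the maximal approval count `Y` and exactly
one candidate achieves `Y`, then no partition `(C₁,C₂)` of `C` makes `p` a winner
of the two-stage RPC-TE approval election. -/
theorem approval_cc_rpc_te_nuw_no_solution {α : Type*}
    (C : Finset α) (V : List (α → Bool)) (p : α) (hp : p ∈ C)
    (hw : ∃ w ∈ C, w ≠ p ∧ (∀ c ∈ C, appCount V c ≤ appCount V w) ∧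
      (∀ c ∈ C, appCount V c = appCount V w → c = w)) :
    ∀ C₁ C₂ : Finset α, C₁ ∪ C₂ = C → C₁ ∩ C₂ = ∅ →
      p ∉ appWinners (appUW C₁ V ∪ appUW C₂ V) V := by
  obtain ⟨w, hwC, hwp, hmax, huniq⟩ := hw
  intro C₁ C₂ hU hI hmem
  have key : ∀ S : Finset α, S ⊆ C → w ∈ S → appUW S V = {w} := by
    intro S hS hwS
    have hwin : appWinners S V = {w} := by
      ext c
      simp only [appWinners, Finset.mem_filter, Finset.mem_singleton]
      constructor
      · rintro ⟨hcS, hc⟩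
        exact huniq c (hS hcS) (le_antisymm (hmax c (hS hcS)) (hc w hwS))
      · rintro rfl
        exact ⟨hwS, fun d hd => hmax d (hS hd)⟩
    simp [appUW, hwin]
  have hwU : w ∈ C₁ ∪ C₂ := hU ▸ hwC
  have h1 : C₁ ⊆ C := hU ▸ Finset.subset_union_left
  have h2 : C₂ ⊆ C := hU ▸ Finset.subset_union_right
  have hwsurv : w ∈ appUW C₁ V ∪ appUW C₂ V := by
    rcases Finset.mem_union.mp hwU with h | h
    · exact Finset.mem_union_left _ (by rw [key C₁ h1 h]; simp)
    · exact Finset.mem_union_right _ (by rw [key C₂ h2 h]; simp)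
  have hle : appCount V w ≤ appCount V p :=
    (Finset.mem_filter.mp hmem).2 w hwsurv
  exact hwp ((huniq p hp (le_antisymm (hmax p hp) hle)).symm)
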